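/- For all Ising spin variables x1, x2, x3 ∈ {−1,1} and every real constant M ≥ 1, the minimum over auxiliary spin variables y, d ∈ {−1,1} of the expression y·x3 + M·P(x1,x2,y,d), where P(x1,x2,y,d) := 4 + x1 + x2 − y − 2d + x1·x2 − x1·y − x2·y − 2·x1·d − 2·x2·d + 2·y·d, equals the cubic monomial x1·x2·x3. -/
import Mathlib


/-- Ising quadratization of a cubic spin monomial: for spins
`x1, x2, x3 ∈ {−1,1}` and any penalty constant `M ≥ 1`, the minimum over
auxiliary spins `y, d ∈ {−1,1}` of
`y*x3 + M*(4 + x1 + x2 - y - 2*d + x1*x2 - x1*y - x2*y - 2*x1*d - 2*x2*d + 2*y*d)`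
equals `x1*x2*x3`. -/
theorem ising_cubic_quadratization
    (x1 x2 x3 M : ℝ)
    (hx1 : x1 = -1 ∨ x1 = 1) (hx2 : x2 = -1 ∨ x2 = 1) (hx3 : x3 = -1 ∨ x3 = 1)
    (hM : 1 ≤ M) :
    IsLeast
      {v : ℝ | ∃ y d : ℝ, (y = -1 ∨ y = 1) ∧ (d = -1 ∨ d = 1) ∧
        v = y * x3 + M * (4 + x1 + x2 - y - 2 * d + x1 * x2 - x1 * y - x2 * y
              - 2 * x1 * d - 2 * x2 * d + 2 * y * d)}
      (x1 * x2 * x3) := by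
  constructor
  · rcases hx1 with rfl | rfl <;> rcases hx2 with rfl | rfl
    · exact ⟨1, -1, Or.inr rfl, Or.inl rfl, by ring⟩
    · exact ⟨-1, 1, Or.inl rfl, Or.inr rfl, by ring⟩
    · exact ⟨-1, 1, Or.inl rfl, Or.inr rfl, by ring⟩
    · exact ⟨1, 1, Or.inr rfl, Or.inr rfl, by ring⟩
  · rintro v ⟨y, d, hy, hd, rfl⟩
    rcases hx1 with rfl | rfl <;> rcases hx2 with rfl | rfl <;>
      rcases hx3 with rfl | rfl <;> rcases hy with rfl | rfl <;>
      rcases hd with rfl | rfl <;> nlinarith [hM]
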